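/- Consider a finite MDP with state set S, action set A, transition kernel P and reward function r. Let q ∈ ℕ and suppose: (i) for every θ ∈ ℝ^q, π_θ is a policy with π_θ(a|s) > 0 for all s, a, and for each (s,a) the map θ ↦ π_θ(a|s) is differentiable; (ii) for every θ, d_θ is a probability vector on S that is stationary for π_θ, and for each s the map θ ↦ d_θ(s) is differentiable; (iii) J(θ) = Σ_s d_θ(s) Σ_a π_θ(a|s) r(s,a); (iv) for every θ, the pair (J(θ), V_θ) satisfies the average-reward Bellman equation for π_θ, and for each s the map θ ↦ V_θ(s) is differentiable. Define Q_θ(s,a) = r(s,a) − J(θ) + Σ_{s'} P(s'|s,a) V_θ(s') and A_θ(s,a) = Q_θ(s,a) − V_θ(s). Then J is differentiable and for every θ, ∇_θ J(θ) = Σ_s d_θ(s) Σ_a π_θ(a|s) A_θ(s,a) ∇_θ log π_θ(a|s). -/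

import Mathlib

open scoped BigOperators

/-- Average-reward policy gradient theorem (Lemma 1 of the paper) for a finite MDP,
with all differentiability hypotheses explicit: if `d θ` is a stationary distribution
for `π θ`, `J θ` is the stationary expected reward, and `(J θ, V θ)` satisfies the
average-reward Bellman equation for `π θ`, then `J` is differentiable and
`∇ J(θ) = ∑_s d θ s ∑_a π θ (a|s) A_θ(s,a) ∇ log π θ (a|s)`. -/
theorem stmt_3 {S A : Type*} [Fintype S] [Fintype A] [Nonempty S] [Nonempty A]
    (q : ℕ)
    (P : S → A → S → ℝ) (hP0 : ∀ s a s', 0 ≤ P s a s') (hP1 : ∀ s a, ∑ s', P s a s' = 1)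
    (r : S → A → ℝ)
    (π : EuclideanSpace ℝ (Fin q) → S → A → ℝ)
    (hπpos : ∀ θ s a, 0 < π θ s a)
    (hπ1 : ∀ θ s, ∑ a, π θ s a = 1)
    (hπdiff : ∀ s a, Differentiable ℝ (fun θ => π θ s a))
    (d : EuclideanSpace ℝ (Fin q) → S → ℝ)
    (hd0 : ∀ θ s, 0 ≤ d θ s) (hd1 : ∀ θ, ∑ s, d θ s = 1)
    (hstat : ∀ θ s', ∑ s, ∑ a, d θ s * π θ s a * P s a s' = d θ s')
    (hddiff : ∀ s, Differentiable ℝ (fun θ => d θ s))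
    (J : EuclideanSpace ℝ (Fin q) → ℝ)
    (hJ : ∀ θ, J θ = ∑ s, d θ s * ∑ a, π θ s a * r s a)
    (V : EuclideanSpace ℝ (Fin q) → S → ℝ)
    (hVdiff : ∀ s, Differentiable ℝ (fun θ => V θ s))
    (hBell : ∀ θ s, V θ s = ∑ a, π θ s a * (r s a - J θ + ∑ s', P s a s' * V θ s')) :
    Differentiable ℝ J ∧
      ∀ θ, gradient J θ
        = ∑ s, ∑ a,
            (d θ s * π θ s a *
              ((r s a - J θ + ∑ s', P s a s' * V θ s') - V θ s))
              • gradient (fun θ' => Real.log (π θ' s a)) θ := by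
  classical
  have hJdiff : Differentiable ℝ J := by
    have hJeq : J = fun θ => ∑ s, d θ s * ∑ a, π θ s a * r s a := funext hJ
    rw [hJeq]
    exact Differentiable.fun_sum fun s _ =>
      (hddiff s).fun_mul (Differentiable.fun_sum fun a _ => (hπdiff s a).mul_const _)
  refine ⟨hJdiff, fun θ => ?_⟩
  set Dπ : S → A → (EuclideanSpace ℝ (Fin q)) →L[ℝ] ℝ :=
    fun s a => fderiv ℝ (fun θ' => π θ' s a) θ with hDπdef
  set DV : S → (EuclideanSpace ℝ (Fin q)) →L[ℝ] ℝ :=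
    fun s => fderiv ℝ (fun θ' => V θ' s) θ with hDVdef
  set DJ : (EuclideanSpace ℝ (Fin q)) →L[ℝ] ℝ := fderiv ℝ J θ with hDJdef
  -- derivative of the Q-part of the Bellman equation
  have hQ : ∀ s a, HasFDerivAt (fun θ' => r s a - J θ' + ∑ s', P s a s' * V θ' s')
      (-DJ + ∑ s', P s a s' • DV s') θ := fun s a =>
    (((hJdiff θ).hasFDerivAt).const_sub (r s a)).add
      (HasFDerivAt.fun_sum fun s' _ => ((hVdiff s' θ).hasFDerivAt).const_mul (P s a s'))
  have hVB : ∀ s, HasFDerivAt (fun θ' => V θ' s)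
      (∑ a, (π θ s a • (-DJ + ∑ s', P s a s' • DV s')
        + (r s a - J θ + ∑ s', P s a s' * V θ s') • Dπ s a)) θ := by
    intro s
    have h1 : HasFDerivAt
        (fun θ' => ∑ a, π θ' s a * (r s a - J θ' + ∑ s', P s a s' * V θ' s'))
        (∑ a, (π θ s a • (-DJ + ∑ s', P s a s' • DV s')
          + (r s a - J θ + ∑ s', P s a s' * V θ s') • Dπ s a)) θ :=
      HasFDerivAt.fun_sum fun a _ => ((hπdiff s a θ).hasFDerivAt.fun_mul (hQ s a))
    have heq : (fun θ' => V θ' s)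
        = fun θ' => ∑ a, π θ' s a * (r s a - J θ' + ∑ s', P s a s' * V θ' s') :=
      funext fun θ' => hBell θ' s
    rw [heq]
    exact h1
  have key : ∀ v, DJ v = ∑ s, d θ s *
      ∑ a, ((r s a - J θ + ∑ s', P s a s' * V θ s') - V θ s) * Dπ s a v := by
    intro v
    -- ∑_a ∂π = 0
    have hsum0 : ∀ s, ∑ a, Dπ s a v = 0 := by
      intro s
      have h1 : HasFDerivAt (fun θ' => ∑ a, π θ' s a) (∑ a, Dπ s a) θ :=
        HasFDerivAt.fun_sum fun a _ => (hπdiff s a θ).hasFDerivAt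
      have h2 : HasFDerivAt (fun θ' : EuclideanSpace ℝ (Fin q) => ∑ a, π θ' s a)
          (0 : (EuclideanSpace ℝ (Fin q)) →L[ℝ] ℝ) θ := by
        have he : (fun θ' : EuclideanSpace ℝ (Fin q) => ∑ a, π θ' s a) = fun _ => (1:ℝ) :=
          funext fun θ' => hπ1 θ' s
        rw [he]; exact hasFDerivAt_const _ _
      have h3 := h1.unique h2
      calc ∑ a, Dπ s a v = (∑ a, Dπ s a) v := by
            rw [ContinuousLinearMap.sum_apply]
        _ = 0 := by rw [h3]; rfl
    have hDVv : ∀ s, DV s v = ∑ a, (π θ s a * (-(DJ v) + ∑ s', P s a s' * DV s' v)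
        + (r s a - J θ + ∑ s', P s a s' * V θ s') * Dπ s a v) := by
      intro s
      have h4 := (hVB s).fderiv
      have h5 : DV s v = (∑ a, (π θ s a • (-DJ + ∑ s', P s a s' • DV s')
          + (r s a - J θ + ∑ s', P s a s' * V θ s') • Dπ s a)) v := by
        exact congrArg (fun L => L v) h4
      rw [h5]
      simp only [ContinuousLinearMap.sum_apply, ContinuousLinearMap.add_apply,
        ContinuousLinearMap.smul_apply, ContinuousLinearMap.neg_apply, smul_eq_mul]
    -- algebraic manipulation
    have hstep : ∑ s, d θ s * DV s v
        = -(DJ v) + (∑ s, d θ s * DV s v)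
          + ∑ s, d θ s * ∑ a, (r s a - J θ + ∑ s', P s a s' * V θ s') * Dπ s a v := by
      have p1 : (∑ s, d θ s * ∑ a, π θ s a * (-(DJ v))) = -(DJ v) := by
        have h6 : ∀ s : S, (∑ a, π θ s a * (-(DJ v))) = -(DJ v) := fun s => by
          rw [← Finset.sum_mul, hπ1 θ s, one_mul]
        simp only [h6]
        rw [← Finset.sum_mul, hd1 θ, one_mul]
      have p2 : (∑ s, d θ s * ∑ a, π θ s a * ∑ s', P s a s' * DV s' v)
          = ∑ s', d θ s' * DV s' v := by
        calc ∑ s, d θ s * ∑ a, π θ s a * ∑ s', P s a s' * DV s' v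
            = ∑ s, ∑ a, ∑ s', d θ s * π θ s a * P s a s' * DV s' v := by
              refine Finset.sum_congr rfl fun s _ => ?_
              rw [Finset.mul_sum]
              refine Finset.sum_congr rfl fun a _ => ?_
              rw [Finset.mul_sum, Finset.mul_sum]
              refine Finset.sum_congr rfl fun s' _ => by ring
          _ = ∑ s, ∑ s', ∑ a, d θ s * π θ s a * P s a s' * DV s' v :=
              Finset.sum_congr rfl fun s _ => Finset.sum_comm
          _ = ∑ s', ∑ s, ∑ a, d θ s * π θ s a * P s a s' * DV s' v := Finset.sum_comm
          _ = ∑ s', (∑ s, ∑ a, d θ s * π θ s a * P s a s') * DV s' v := by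
              refine Finset.sum_congr rfl fun s' _ => ?_
              rw [Finset.sum_mul]
              refine Finset.sum_congr rfl fun s _ => ?_
              rw [Finset.sum_mul]
          _ = ∑ s', d θ s' * DV s' v := by
              refine Finset.sum_congr rfl fun s' _ => ?_
              rw [hstat θ s']
      calc ∑ s, d θ s * DV s v
          = ∑ s, (d θ s * ∑ a, π θ s a * (-(DJ v))
              + d θ s * ∑ a, π θ s a * ∑ s', P s a s' * DV s' v
              + d θ s * ∑ a, (r s a - J θ + ∑ s', P s a s' * V θ s') * Dπ s a v) := by
            refine Finset.sum_congr rfl fun s _ => ?_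
            rw [hDVv s]
            have hexp : ∀ a : A, π θ s a * (-(DJ v) + ∑ s', P s a s' * DV s' v)
                  + (r s a - J θ + ∑ s', P s a s' * V θ s') * Dπ s a v
                = π θ s a * (-(DJ v)) + π θ s a * ∑ s', P s a s' * DV s' v
                  + (r s a - J θ + ∑ s', P s a s' * V θ s') * Dπ s a v := fun a => by ring
            rw [Finset.sum_congr rfl fun a _ => hexp a, Finset.sum_add_distrib,
              Finset.sum_add_distrib, mul_add, mul_add]
        _ = (∑ s, d θ s * ∑ a, π θ s a * (-(DJ v)))
            + (∑ s, d θ s * ∑ a, π θ s a * ∑ s', P s a s' * DV s' v)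
            + ∑ s, d θ s * ∑ a, (r s a - J θ + ∑ s', P s a s' * V θ s') * Dπ s a v := by
            rw [← Finset.sum_add_distrib, ← Finset.sum_add_distrib]
        _ = -(DJ v) + (∑ s, d θ s * DV s v)
            + ∑ s, d θ s * ∑ a, (r s a - J θ + ∑ s', P s a s' * V θ s') * Dπ s a v := by
            rw [p1, p2]
    have hDJv : DJ v = ∑ s, d θ s *
        ∑ a, (r s a - J θ + ∑ s', P s a s' * V θ s') * Dπ s a v := by linarith
    rw [hDJv]
    refine Finset.sum_congr rfl fun s _ => ?_
    congr 1
    have : ∑ a, ((r s a - J θ + ∑ s', P s a s' * V θ s') - V θ s) * Dπ s a v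
        = (∑ a, (r s a - J θ + ∑ s', P s a s' * V θ s') * Dπ s a v)
          - V θ s * ∑ a, Dπ s a v := by
      rw [Finset.mul_sum, ← Finset.sum_sub_distrib]
      refine Finset.sum_congr rfl fun a _ => by ring
    rw [this, hsum0 s, mul_zero, sub_zero]
  have keyCLM : DJ = ∑ s, ∑ a,
      (d θ s * ((r s a - J θ + ∑ s', P s a s' * V θ s') - V θ s)) • Dπ s a := by
    ext v
    simp only [ContinuousLinearMap.sum_apply, ContinuousLinearMap.smul_apply, smul_eq_mul]
    rw [key v]
    refine Finset.sum_congr rfl fun s _ => ?_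
    rw [Finset.mul_sum]
    refine Finset.sum_congr rfl fun a _ => by ring
  have hlogf : ∀ s a, fderiv ℝ (fun θ' => Real.log (π θ' s a)) θ = (π θ s a)⁻¹ • Dπ s a :=
    fun s a => (((hπdiff s a θ).hasFDerivAt).log (hπpos θ s a).ne').fderiv
  apply (InnerProductSpace.toDual ℝ (EuclideanSpace ℝ (Fin q))).injective
  have htg : ∀ (f : EuclideanSpace ℝ (Fin q) → ℝ) (x),
      (InnerProductSpace.toDual ℝ (EuclideanSpace ℝ (Fin q))) (gradient f x) = fderiv ℝ f x :=
    fun f x => by simp [gradient]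
  rw [htg, map_sum]
  simp only [map_sum, map_smulₛₗ, starRingEnd_apply, star_trivial, htg, hlogf]
  rw [← hDJdef, keyCLM]
  refine Finset.sum_congr rfl fun s _ => Finset.sum_congr rfl fun a _ => ?_
  rw [smul_smul]
  congr 1
  have hpos := (hπpos θ s a).ne'
  field_simp
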